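/- Assume a(s)/s^k → a_∞ and f(s)/s^p → f_∞ as s → +∞ with k, a_∞, f_∞ > 0 and p > 1. Then the Keller–Osserman condition (existence of r with f(r) > 0, f ≥ 0 on (r,∞), and ∫_{g⁻¹(r)}^{+∞} ds/√(F(g(s))) < ∞ with F(t) = ∫_r^t f) holds if and only if p > k + 1. -/

import Mathlib

open Filter Topology MeasureTheory Set

private lemma monoOn_of_hasDerivAt {h h' : ℝ → ℝ} {D : Set ℝ} (hD : Convex ℝ D)
    (hd : ∀ s ∈ D, HasDerivAt h (h' s) s) (h0 : ∀ s ∈ D, 0 ≤ h' s) :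
    MonotoneOn h D := by
  refine monotoneOn_of_deriv_nonneg hD
    (fun s hs => (hd s hs).continuousAt.continuousWithinAt)
    (fun s hs => ((hd s (interior_subset hs)).differentiableAt).differentiableWithinAt)
    (fun s hs => ?_)
  rw [(hd s (interior_subset hs)).deriv]
  exact h0 s (interior_subset hs)

private lemma deriv_ge_linear {h h' : ℝ → ℝ} {D : Set ℝ} (hD : Convex ℝ D) {c : ℝ}
    (hd : ∀ s ∈ D, HasDerivAt h (h' s) s) (hc : ∀ s ∈ D, c ≤ h' s)
    {A t : ℝ} (hA : A ∈ D) (htD : t ∈ D) (ht : A ≤ t) :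
    h A + c * (t - A) ≤ h t := by
  have := monoOn_of_hasDerivAt (h := fun s => h s - c * s) (h' := fun s => h' s - c) hD
    (fun s hs => by have := (hd s hs).sub ((hasDerivAt_id s).const_mul c); simp only [mul_one] at this; exact this)
    (fun s hs => by show (0:ℝ) ≤ _ - _; have := hc s hs; linarith) hA htD ht
  simp only [] at this
  linarith

private lemma deriv_le_linear {h h' : ℝ → ℝ} {D : Set ℝ} (hD : Convex ℝ D) {c : ℝ}
    (hd : ∀ s ∈ D, HasDerivAt h (h' s) s) (hc : ∀ s ∈ D, h' s ≤ c)
    {A t : ℝ} (hA : A ∈ D) (htD : t ∈ D) (ht : A ≤ t) :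
    h t ≤ h A + c * (t - A) := by
  have := monoOn_of_hasDerivAt (h := fun s => c * s - h s) (h' := fun s => c - h' s) hD
    (fun s hs => by have := ((hasDerivAt_id s).const_mul c).sub (hd s hs); simp only [mul_one] at this; exact this)
    (fun s hs => by show (0:ℝ) ≤ _ - _; have := hc s hs; linarith) hA htD ht
  simp only [] at this
  linarith

private lemma sandwich {u : ℝ → ℝ} {L : ℝ} (hL : 0 < L) (h : Tendsto u atTop (𝓝 L)) :
    ∃ S : ℝ, 1 ≤ S ∧ ∀ s, S ≤ s → L / 2 ≤ u s ∧ u s ≤ 2 * L := by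
  have h1 : ∀ᶠ s in atTop, u s ∈ Set.Ioo (L / 2) (2 * L) :=
    h (Ioo_mem_nhds (by linarith) (by linarith))
  obtain ⟨S, hS⟩ := eventually_atTop.mp h1
  exact ⟨max S 1, le_max_right _ _, fun s hs =>
    ⟨(hS s (le_trans (le_max_left _ _) hs)).1.le, (hS s (le_trans (le_max_left _ _) hs)).2.le⟩⟩

private lemma g_mono {a g : ℝ → ℝ} {ν : ℝ} (hν : 0 < ν) (hab : ∀ s, ν ≤ a s)
    (hg : ∀ s, HasDerivAt g (1 / Real.sqrt (a (g s))) s) : StrictMono g :=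
  strictMono_of_deriv_pos fun s => by
    rw [(hg s).deriv]
    exact one_div_pos.mpr (Real.sqrt_pos.mpr (lt_of_lt_of_le hν (hab _)))

private lemma g_top {a g : ℝ → ℝ} {ν : ℝ} (ha : Continuous a) (hν : 0 < ν)
    (hab : ∀ s, ν ≤ a s) (hg0 : g 0 = 0)
    (hg : ∀ s, HasDerivAt g (1 / Real.sqrt (a (g s))) s) : Tendsto g atTop atTop := by
  by_contra hcon
  have hmono := (g_mono hν hab hg).monotone
  have hbdd : BddAbove (Set.range g) := by
    by_contra hb
    exact hcon (tendsto_atTop_atTop_of_monotone' hmono hb)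
  obtain ⟨M, hM⟩ := hbdd
  have hM0 : (0:ℝ) ≤ M := hg0 ▸ hM (Set.mem_range_self 0)
  obtain ⟨x, hx, hmax'⟩ := isCompact_Icc.exists_isMaxOn (Set.nonempty_Icc.mpr hM0)
    (ha.continuousOn (s := Icc 0 M))
  have hmax : ∀ y ∈ Icc (0:ℝ) M, a y ≤ a x := fun y hy => hmax' hy
  have hA : 0 < a x := lt_of_lt_of_le hν (hab x)
  have hsA : 0 < Real.sqrt (a x) := Real.sqrt_pos.mpr hA
  have hgin : ∀ s ∈ Ici (0:ℝ), g s ∈ Icc (0:ℝ) M := fun s hs =>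
    ⟨hg0 ▸ hmono hs, hM (Set.mem_range_self s)⟩
  have hlin : ∀ s ∈ Ici (0:ℝ), g 0 + (1 / Real.sqrt (a x)) * (s - 0) ≤ g s := by
    intro s hs
    refine deriv_ge_linear (convex_Ici 0) (fun t _ => hg t) (fun t ht => ?_) self_mem_Ici hs hs
    exact one_div_le_one_div_of_le (Real.sqrt_pos.mpr (lt_of_lt_of_le hν (hab _)))
      (Real.sqrt_le_sqrt (hmax _ (hgin t ht)))
  have h1 : (0:ℝ) ≤ (M + 1) * Real.sqrt (a x) := by positivity
  have h2 := hlin _ h1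
  rw [hg0] at h2
  have h3 : (1 / Real.sqrt (a x)) * ((M + 1) * Real.sqrt (a x) - 0) = M + 1 := by
    field_simp
    ring
  rw [h3] at h2
  have := hM (Set.mem_range_self ((M + 1) * Real.sqrt (a x)))
  linarith
private lemma sqrt_rpow' {x : ℝ} (hx : 0 ≤ x) (y : ℝ) :
    Real.sqrt (x ^ y) = x ^ (y / 2) := by
  rw [Real.sqrt_eq_rpow, ← Real.rpow_mul hx]
  congr 1
  ring

private lemma g_bounds {a g : ℝ → ℝ} {ν k aInf : ℝ} (ha : Continuous a) (hν : 0 < ν)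
    (hab : ∀ s, ν ≤ a s) (hg0 : g 0 = 0)
    (hg : ∀ s, HasDerivAt g (1 / Real.sqrt (a (g s))) s)
    (hk : 0 < k) (haInf : 0 < aInf)
    (haAsym : Tendsto (fun s => a s / s ^ k) atTop (𝓝 aInf)) :
    ∃ c1 c2 S2 : ℝ, 0 < c1 ∧ 0 < c2 ∧ 1 ≤ S2 ∧
      ∀ s, S2 ≤ s → c1 * s ^ (2 / (k + 2)) ≤ g s ∧ g s ≤ c2 * s ^ (2 / (k + 2)) := by
  obtain ⟨Sa, hSa1, hSa⟩ := sandwich haInf haAsym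
  -- convert to bounds on a
  have haB : ∀ t : ℝ, Sa ≤ t → aInf / 2 * t ^ k ≤ a t ∧ a t ≤ 2 * aInf * t ^ k := by
    intro t ht
    have htpos : (0:ℝ) < t := lt_of_lt_of_le (by linarith) ht
    have htk : (0:ℝ) < t ^ k := Real.rpow_pos_of_pos htpos k
    obtain ⟨h1, h2⟩ := hSa t ht
    constructor
    · calc aInf / 2 * t ^ k ≤ a t / t ^ k * t ^ k := by
            exact mul_le_mul_of_nonneg_right h1 htk.le
        _ = a t := div_mul_cancel₀ _ htk.ne'
    · calc a t = a t / t ^ k * t ^ k := (div_mul_cancel₀ _ htk.ne').symm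
        _ ≤ 2 * aInf * t ^ k := mul_le_mul_of_nonneg_right h2 htk.le
  -- S1 : g s ≥ max Sa 1 for s ≥ S1
  obtain ⟨S1', hS1'⟩ := eventually_atTop.mp
    ((g_top ha hν hab hg0 hg).eventually_ge_atTop (max Sa 1))
  set S1 := max S1' 1 with hS1def
  have hgS1 : ∀ s, S1 ≤ s → max Sa 1 ≤ g s := fun s hs =>
    hS1' s (le_trans (le_max_left _ _) hs)
  set e := (k + 2) / 2 with hedef
  have he1 : (1:ℝ) ≤ e := by rw [hedef]; linarith
  have hepos : (0:ℝ) < e := by linarith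
  have hek : e - 1 = k / 2 := by rw [hedef]; ring
  have hinv_e : 1 / e = 2 / (k + 2) := by
    rw [hedef]; field_simp
  -- derivative of ψ = g ^ e
  set ψ' : ℝ → ℝ := fun s => e * g s ^ (e - 1) * (1 / Real.sqrt (a (g s))) with hψ'def
  have hψd : ∀ s : ℝ, HasDerivAt (fun t => g t ^ e) (ψ' s) s := fun s =>
    (Real.hasDerivAt_rpow_const (x := g s) (p := e) (Or.inr he1)).comp s (hg s)
  set cl := e / Real.sqrt (2 * aInf) with hcldef
  set cu := e / Real.sqrt (aInf / 2) with hcudef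
  have hsqa2 : (0:ℝ) < Real.sqrt (2 * aInf) := Real.sqrt_pos.mpr (by linarith)
  have hsqa2' : (0:ℝ) < Real.sqrt (aInf / 2) := Real.sqrt_pos.mpr (by linarith)
  have hclpos : 0 < cl := div_pos hepos hsqa2
  have hcupos : 0 < cu := div_pos hepos hsqa2'
  -- ψ' bounds on Ici S1
  have hψ'bound : ∀ s ∈ Set.Ici S1, cl ≤ ψ' s ∧ ψ' s ≤ cu := by
    intro s hs
    have hgs : max Sa 1 ≤ g s := hgS1 s hs
    have hgs1 : (1:ℝ) ≤ g s := le_trans (le_max_right _ _) hgs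
    have hgs0 : (0:ℝ) < g s := by linarith
    have hgsa : Sa ≤ g s := le_trans (le_max_left _ _) hgs
    obtain ⟨hal, hau⟩ := haB (g s) hgsa
    set G := g s ^ (k / 2) with hGdef
    have hGpos : 0 < G := Real.rpow_pos_of_pos hgs0 _
    have hsq_gk : Real.sqrt (g s ^ k) = G := sqrt_rpow' hgs0.le k
    have hA'pos : 0 < Real.sqrt (a (g s)) :=
      Real.sqrt_pos.mpr (lt_of_lt_of_le hν (hab _))
    have hA'u : Real.sqrt (a (g s)) ≤ Real.sqrt (2 * aInf) * G := by
      rw [← hsq_gk, ← Real.sqrt_mul (by linarith)]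
      exact Real.sqrt_le_sqrt hau
    have hA'l : Real.sqrt (aInf / 2) * G ≤ Real.sqrt (a (g s)) := by
      rw [← hsq_gk, ← Real.sqrt_mul (by linarith)]
      exact Real.sqrt_le_sqrt hal
    have hψ's : ψ' s = e * G / Real.sqrt (a (g s)) := by
      rw [hψ'def]; simp only []; rw [hek, ← hGdef]; ring
    constructor
    · rw [hψ's, le_div_iff₀ hA'pos, hcldef]
      calc e / Real.sqrt (2 * aInf) * Real.sqrt (a (g s))
          ≤ e / Real.sqrt (2 * aInf) * (Real.sqrt (2 * aInf) * G) :=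
            mul_le_mul_of_nonneg_left hA'u (by positivity)
        _ = e * G := by field_simp
    · rw [hψ's, div_le_iff₀ hA'pos, hcudef]
      calc e * G = e / Real.sqrt (aInf / 2) * (Real.sqrt (aInf / 2) * G) := by field_simp
        _ ≤ e / Real.sqrt (aInf / 2) * Real.sqrt (a (g s)) :=
            mul_le_mul_of_nonneg_left hA'l (by positivity)
  have hψS1nonneg : (0:ℝ) ≤ g S1 ^ e := Real.rpow_nonneg
    (le_trans zero_le_one (le_trans (le_max_right _ _) (hgS1 S1 le_rfl))) e
  set Cu := g S1 ^ e + cu with hCudef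
  have hCupos : 0 < Cu := by positivity
  -- upper bound for ψ on Ici S1
  have hψu : ∀ s, S1 ≤ s → g s ^ e ≤ Cu * s := by
    intro s hs
    have hS11 : (1:ℝ) ≤ S1 := le_max_right _ _
    have hs1 : (1:ℝ) ≤ s := le_trans hS11 hs
    have := deriv_le_linear (convex_Ici S1) (fun t _ => hψd t)
      (fun t ht => (hψ'bound t ht).2) self_mem_Ici hs hs
    calc g s ^ e ≤ g S1 ^ e + cu * (s - S1) := this
      _ ≤ g S1 ^ e * s + cu * s := by nlinarith
      _ = Cu * s := by rw [hCudef]; ring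
  -- lower bound for ψ for s ≥ 2 * S1
  have hψl : ∀ s, 2 * S1 ≤ s → cl / 2 * s ≤ g s ^ e := by
    intro s hs
    have hS11 : (1:ℝ) ≤ S1 := le_max_right _ _
    have hsS1 : S1 ≤ s := by linarith
    have := deriv_ge_linear (convex_Ici S1) (fun t _ => hψd t)
      (fun t ht => (hψ'bound t ht).1) self_mem_Ici hsS1 hsS1
    nlinarith [hψS1nonneg]
  refine ⟨(cl / 2) ^ (2 / (k + 2)), Cu ^ (2 / (k + 2)), 2 * S1,
    Real.rpow_pos_of_pos (by linarith) _, Real.rpow_pos_of_pos hCupos _,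
    by have : (1:ℝ) ≤ S1 := le_max_right _ _; linarith, ?_⟩
  intro s hs
  have hS11 : (1:ℝ) ≤ S1 := le_max_right _ _
  have hsS1 : S1 ≤ s := by linarith
  have hspos : (0:ℝ) < s := by linarith
  have hgs0 : (0:ℝ) ≤ g s :=
    le_trans zero_le_one (le_trans (le_max_right _ _) (hgS1 s hsS1))
  have hgse : g s = (g s ^ e) ^ (1 / e) := by
    rw [← Real.rpow_mul hgs0, mul_one_div, div_self hepos.ne', Real.rpow_one]
  constructor
  · rw [← hinv_e]
    calc (cl / 2) ^ (1 / e) * s ^ (1 / e) = (cl / 2 * s) ^ (1 / e) :=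
          (Real.mul_rpow (by positivity) hspos.le).symm
      _ ≤ (g s ^ e) ^ (1 / e) :=
          Real.rpow_le_rpow (by positivity) (hψl s hs) (by positivity)
      _ = g s := hgse.symm
  · rw [← hinv_e]
    calc g s = (g s ^ e) ^ (1 / e) := hgse
      _ ≤ (Cu * s) ^ (1 / e) :=
          Real.rpow_le_rpow (Real.rpow_nonneg hgs0 e) (hψu s hsS1) (by positivity)
      _ = Cu ^ (1 / e) * s ^ (1 / e) := Real.mul_rpow hCupos.le hspos.le
private lemma F_lower {f : ℝ → ℝ} (hfc : Continuous f) {fInf p Sf r t : ℝ}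
    (hfInf : 0 < fInf) (hp0 : 0 ≤ p) (hSf1 : 1 ≤ Sf)
    (hfS : ∀ s, Sf ≤ s → fInf / 2 * s ^ p ≤ f s)
    (hfr : 0 ≤ f r) (hfpos : ∀ s, r < s → 0 ≤ f s)
    (ht : 2 * max r Sf ≤ t) :
    fInf / 2 * (t / 2) ^ (p + 1) ≤ ∫ τ in r..t, f τ := by
  have hrT : r ≤ t / 2 := le_trans (le_max_left r Sf) (by linarith)
  have hSfT : Sf ≤ t / 2 := le_trans (le_max_right r Sf) (by linarith)
  have ht2pos : (0:ℝ) < t / 2 := lt_of_lt_of_le (by linarith) hSfT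
  have hsplit : (∫ τ in r..(t/2), f τ) + (∫ τ in (t/2)..t, f τ) = ∫ τ in r..t, f τ :=
    intervalIntegral.integral_add_adjacent_intervals
      (hfc.intervalIntegrable _ _) (hfc.intervalIntegrable _ _)
  have h1 : (0:ℝ) ≤ ∫ τ in r..(t/2), f τ := by
    apply intervalIntegral.integral_nonneg hrT
    intro u hu
    rcases eq_or_lt_of_le hu.1 with h | h
    · exact h ▸ hfr
    · exact hfpos u h
  have h2 : fInf / 2 * (t / 2) ^ (p + 1) ≤ ∫ τ in (t/2)..t, f τ := by
    have hle : t / 2 ≤ t := by linarith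
    have hmono := intervalIntegral.integral_mono_on (f := fun _ => fInf / 2 * (t/2) ^ p)
      (g := f) (μ := MeasureTheory.volume) hle (intervalIntegrable_const)
      (hfc.intervalIntegrable _ _) (fun x hx => ?_)
    · calc fInf / 2 * (t / 2) ^ (p + 1)
          = (t - t / 2) * (fInf / 2 * (t / 2) ^ p) := by
            rw [Real.rpow_add_one ht2pos.ne']; ring
        _ = ∫ _ in (t/2)..t, (fInf / 2 * (t/2) ^ p) := by
            rw [intervalIntegral.integral_const, smul_eq_mul]
        _ ≤ ∫ τ in (t/2)..t, f τ := hmono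
    · calc fInf / 2 * (t / 2) ^ p ≤ fInf / 2 * x ^ p :=
            mul_le_mul_of_nonneg_left (Real.rpow_le_rpow ht2pos.le hx.1 hp0) (by positivity)
        _ ≤ f x := hfS x (le_trans hSfT hx.1)
  linarith

private lemma F_upper {f : ℝ → ℝ} (hfc : Continuous f) {fInf p Sf r t : ℝ}
    (hfInf : 0 < fInf) (hp0 : 0 ≤ p) (hSf1 : 1 ≤ Sf)
    (hfS : ∀ s, Sf ≤ s → f s ≤ 2 * fInf * s ^ p)
    (ht : max r Sf ≤ t) (ht1 : 1 ≤ t) :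
    ∫ τ in r..t, f τ ≤ (|∫ τ in r..(max r Sf), f τ| + 2 * fInf) * t ^ (p + 1) := by
  set T0 := max r Sf with hT0def
  have hT01 : (1:ℝ) ≤ T0 := le_trans hSf1 (le_max_right _ _)
  have htpos : (0:ℝ) < t := by linarith
  have htp1 : (1:ℝ) ≤ t ^ (p + 1) := by
    calc (1:ℝ) = 1 ^ (p + 1) := (Real.one_rpow _).symm
      _ ≤ t ^ (p + 1) := Real.rpow_le_rpow zero_le_one ht1 (by linarith)
  have hsplit : (∫ τ in r..T0, f τ) + (∫ τ in T0..t, f τ) = ∫ τ in r..t, f τ :=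
    intervalIntegral.integral_add_adjacent_intervals
      (hfc.intervalIntegrable _ _) (hfc.intervalIntegrable _ _)
  have h1 : (∫ τ in r..T0, f τ) ≤ |∫ τ in r..T0, f τ| * t ^ (p + 1) := by
    calc (∫ τ in r..T0, f τ) ≤ |∫ τ in r..T0, f τ| := le_abs_self _
      _ = |∫ τ in r..T0, f τ| * 1 := (mul_one _).symm
      _ ≤ |∫ τ in r..T0, f τ| * t ^ (p + 1) :=
          mul_le_mul_of_nonneg_left htp1 (abs_nonneg _)
  have h2 : (∫ τ in T0..t, f τ) ≤ 2 * fInf * t ^ (p + 1) := by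
    have hmono := intervalIntegral.integral_mono_on (f := f)
      (g := fun _ => 2 * fInf * t ^ p) (μ := MeasureTheory.volume) ht
      (hfc.intervalIntegrable _ _) (intervalIntegrable_const) (fun x hx => ?_)
    · calc (∫ τ in T0..t, f τ) ≤ ∫ _ in T0..t, (2 * fInf * t ^ p) := hmono
        _ = (t - T0) * (2 * fInf * t ^ p) := by
            rw [intervalIntegral.integral_const, smul_eq_mul]
        _ ≤ t * (2 * fInf * t ^ p) := by
            have : (0:ℝ) ≤ 2 * fInf * t ^ p := by positivity
            nlinarith
        _ = 2 * fInf * t ^ (p + 1) := by rw [Real.rpow_add_one htpos.ne']; ring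
    · calc f x ≤ 2 * fInf * x ^ p := hfS x (le_trans (le_max_right _ _) hx.1)
        _ ≤ 2 * fInf * t ^ p := by
            have hx0 : (0:ℝ) ≤ x := le_trans (by linarith) hx.1
            exact mul_le_mul_of_nonneg_left (Real.rpow_le_rpow hx0 hx.2 hp0) (by positivity)
  linarith
theorem stmt_6 (a f g ginv : ℝ → ℝ) (ha : ContDiff ℝ 1 a) (ν : ℝ) (hν : 0 < ν)
    (hab : ∀ s, ν ≤ a s) (hf : ContDiff ℝ 1 f)
    (hg : ∀ s, HasDerivAt g (1 / Real.sqrt (a (g s))) s) (hg0 : g 0 = 0)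
    (hinv1 : ∀ s, ginv (g s) = s) (hinv2 : ∀ t, g (ginv t) = t)
    (k p aInf fInf : ℝ) (hk : 0 < k) (hp : 1 < p) (haInf : 0 < aInf) (hfInf : 0 < fInf)
    (haAsym : Tendsto (fun s => a s / s ^ k) atTop (𝓝 aInf))
    (hfAsym : Tendsto (fun s => f s / s ^ p) atTop (𝓝 fInf)) :
    (∃ r : ℝ, 0 < f r ∧ (∀ s, r < s → 0 ≤ f s) ∧
      IntegrableOn (fun s => 1 / Real.sqrt (∫ τ in r..(g s), f τ))
        (Set.Ici (ginv r))) ↔ k + 1 < p := by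
  have hacont := ha.continuous
  have hfcont := hf.continuous
  have hgmono := g_mono hν hab hg
  have hgcont : Continuous g := continuous_iff_continuousAt.mpr fun s => (hg s).continuousAt
  have hgtop := g_top hacont hν hab hg0 hg
  obtain ⟨c1, c2, S2, hc1, hc2, hS21, hgb⟩ := g_bounds hacont hν hab hg0 hg hk haInf haAsym
  obtain ⟨Sf, hSf1, hSfb⟩ := sandwich hfInf hfAsym
  have hfB : ∀ s, Sf ≤ s → fInf / 2 * s ^ p ≤ f s ∧ f s ≤ 2 * fInf * s ^ p := by
    intro s hs
    have hspos : (0:ℝ) < s := lt_of_lt_of_le (by linarith) hs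
    have hsk : (0:ℝ) < s ^ p := Real.rpow_pos_of_pos hspos p
    obtain ⟨h1, h2⟩ := hSfb s hs
    exact ⟨by calc fInf / 2 * s ^ p ≤ f s / s ^ p * s ^ p :=
              mul_le_mul_of_nonneg_right h1 hsk.le
          _ = f s := div_mul_cancel₀ _ hsk.ne',
        by calc f s = f s / s ^ p * s ^ p := (div_mul_cancel₀ _ hsk.ne').symm
          _ ≤ 2 * fInf * s ^ p := mul_le_mul_of_nonneg_right h2 hsk.le⟩
  set q := 2 / (k + 2) with hqdef
  set m := (p + 1) / (k + 2) with hmdef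
  have hk2 : (0:ℝ) < k + 2 := by linarith
  have hqpos : 0 < q := by positivity
  have hmpos : 0 < m := by rw [hmdef]; positivity
  have hqm : q * (p + 1) = 2 * m := by rw [hqdef, hmdef]; field_simp
  have hp0 : (0:ℝ) ≤ p := by linarith
  have hFcont : ∀ r : ℝ, Continuous (fun t => ∫ τ in r..t, f τ) := fun r =>
    continuous_iff_continuousAt.mpr fun t =>
      ((hfcont.integral_hasStrictDerivAt r t).hasDerivAt).continuousAt
  have humeas : ∀ r : ℝ, Measurable (fun s => 1 / Real.sqrt (∫ τ in r..(g s), f τ)) := by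
    intro r
    simp only [one_div]
    exact (Real.continuous_sqrt.comp ((hFcont r).comp hgcont)).measurable.inv
  have hsqm : ∀ s : ℝ, 0 ≤ s → Real.sqrt (s ^ (2 * m)) = s ^ m := by
    intro s hs
    rw [sqrt_rpow' hs]
    congr 1
    ring
  constructor
  · -- forward: existence implies k + 1 < p
    rintro ⟨r, hfr, hfposr, hint⟩
    set s0 := ginv r with hs0def
    have hgs0 : g s0 = r := hinv2 r
    obtain ⟨S', hS'⟩ := eventually_atTop.mp
      (hgtop.eventually_ge_atTop (2 * max r Sf))
    set S := max (max S' S2) (max s0 1) with hSdef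
    have hS0 : (0:ℝ) < S := lt_of_lt_of_le one_pos (le_trans (le_max_right s0 1) (le_max_right _ _))
    have hSs0 : s0 ≤ S := le_trans (le_max_left s0 1) (le_max_right _ _)
    set K := |∫ τ in r..(max r Sf), f τ| + 2 * fInf with hKdef
    have hKpos : 0 < K := by positivity
    set D := K * c2 ^ (p + 1) with hDdef
    have hDpos : 0 < D := mul_pos hKpos (Real.rpow_pos_of_pos hc2 _)
    have hsqD : 0 < Real.sqrt D := Real.sqrt_pos.mpr hDpos
    have key : ∀ s, s ∈ Set.Ioi S → (1 / Real.sqrt D) * s ^ (-m) ≤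
        1 / Real.sqrt (∫ τ in r..(g s), f τ) := by
      intro s hs
      have hsS : S < s := hs
      have hspos : (0:ℝ) < s := lt_trans hS0 hsS
      have hgs2 : 2 * max r Sf ≤ g s :=
        hS' s (le_trans (le_trans (le_max_left _ _) (le_max_left _ _)) hsS.le)
      have hmrsf : (1:ℝ) ≤ max r Sf := le_trans hSf1 (le_max_right _ _)
      have hgs1 : (1:ℝ) ≤ g s := by linarith
      have hFl := F_lower hfcont hfInf hp0 hSf1 (fun t ht => (hfB t ht).1)
        hfr.le hfposr hgs2
      have hFpos : 0 < ∫ τ in r..(g s), f τ :=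
        lt_of_lt_of_le (by positivity) hFl
      have hFu := F_upper hfcont hfInf hp0 hSf1 (fun t ht => (hfB t ht).2)
        (by linarith : max r Sf ≤ g s) hgs1
      have hgub : g s ≤ c2 * s ^ q :=
        (hgb s (le_trans (le_trans (le_max_right _ _) (le_max_left _ _)) hsS.le)).2
      have hgsp : (g s) ^ (p + 1) ≤ c2 ^ (p + 1) * s ^ (2 * m) := by
        calc (g s) ^ (p + 1) ≤ (c2 * s ^ q) ^ (p + 1) :=
              Real.rpow_le_rpow (by linarith) hgub (by linarith)
          _ = c2 ^ (p + 1) * (s ^ q) ^ (p + 1) :=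
              Real.mul_rpow hc2.le (Real.rpow_nonneg hspos.le _)
          _ = c2 ^ (p + 1) * s ^ (2 * m) := by
              rw [← Real.rpow_mul hspos.le, hqm]
      have hFle : (∫ τ in r..(g s), f τ) ≤ D * s ^ (2 * m) := by
        calc (∫ τ in r..(g s), f τ) ≤ K * (g s) ^ (p + 1) := hFu
          _ ≤ K * (c2 ^ (p + 1) * s ^ (2 * m)) :=
              mul_le_mul_of_nonneg_left hgsp hKpos.le
          _ = D * s ^ (2 * m) := by rw [hDdef]; ring
      have hsqF : 0 < Real.sqrt (∫ τ in r..(g s), f τ) := Real.sqrt_pos.mpr hFpos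
      have hsqle : Real.sqrt (∫ τ in r..(g s), f τ) ≤ Real.sqrt D * s ^ m := by
        calc Real.sqrt (∫ τ in r..(g s), f τ) ≤ Real.sqrt (D * s ^ (2 * m)) :=
              Real.sqrt_le_sqrt hFle
          _ = Real.sqrt D * s ^ m := by
              rw [Real.sqrt_mul hDpos.le, hsqm s hspos.le]
      have h1 := one_div_le_one_div_of_le hsqF hsqle
      have heq : 1 / (Real.sqrt D * s ^ m) = (1 / Real.sqrt D) * s ^ (-m) := by
        rw [Real.rpow_neg hspos.le]
        field_simp
      linarith [heq ▸ h1]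
    -- integrability transfer
    have hint' : IntegrableOn (fun s => 1 / Real.sqrt (∫ τ in r..(g s), f τ))
        (Set.Ioi S) := hint.mono_set (fun x hx => le_trans hSs0 (le_of_lt hx))
    have hφmeas : Measurable fun s : ℝ => (1 / Real.sqrt D) * s ^ (-m) :=
      (measurable_of_continuousOn_compl_singleton 0 (fun x hx =>
        (Real.continuousAt_rpow_const x _ (Or.inl hx)).continuousWithinAt)).const_mul _
    have hφint : Integrable (fun s : ℝ => (1 / Real.sqrt D) * s ^ (-m))
        (volume.restrict (Set.Ioi S)) := by
      refine MeasureTheory.Integrable.mono hint' hφmeas.aestronglyMeasurable ?_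
      rw [ae_restrict_iff' measurableSet_Ioi]
      refine Filter.Eventually.of_forall (fun s hs => ?_)
      have hspos : (0:ℝ) < s := lt_trans hS0 hs
      have h1 := key s hs
      have h2 : (0:ℝ) ≤ (1 / Real.sqrt D) * s ^ (-m) := by positivity
      have h3 : (0:ℝ) ≤ 1 / Real.sqrt (∫ τ in r..(g s), f τ) := by positivity
      rw [Real.norm_eq_abs, Real.norm_eq_abs, abs_of_nonneg h2, abs_of_nonneg h3]
      exact h1
    have hrint : IntegrableOn (fun s : ℝ => s ^ (-m)) (Set.Ioi S) := by
      have := hφint.const_mul (Real.sqrt D)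
      have heq : (fun s : ℝ => Real.sqrt D * ((1 / Real.sqrt D) * s ^ (-m))) =
          fun s : ℝ => s ^ (-m) := by
        funext s
        field_simp
      rwa [heq] at this
    have hm1 : -m < -1 := (integrableOn_Ioi_rpow_iff hS0).mp hrint
    have : 1 < m := by linarith
    rw [hmdef] at this
    rw [lt_div_iff₀ hk2] at this
    linarith
  · -- backward: k + 1 < p implies existence
    intro hkp
    have hm1 : 1 < m := by
      rw [hmdef, lt_div_iff₀ hk2]
      linarith
    set r := max Sf 1 with hrdef
    have hrSf : Sf ≤ r := le_max_left _ _
    have hr1 : (1:ℝ) ≤ r := le_max_right _ _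
    have hfr : 0 < f r :=
      lt_of_lt_of_le (by positivity) (hfB r hrSf).1
    have hfposr : ∀ s, r < s → 0 ≤ f s := fun s hs => by
      have : (0:ℝ) < s := by linarith
      exact le_trans (by positivity) (hfB s (by linarith)).1
    refine ⟨r, hfr, hfposr, ?_⟩
    set s0 := ginv r with hs0def
    have hgs0 : g s0 = r := hinv2 r
    -- continuity of f at r gives δ
    obtain ⟨ε, hε, hδ0⟩ := Metric.continuousAt_iff.mp hfcont.continuousAt (f r / 2)
      (half_pos hfr)
    set δ := ε / 2 with hδdef
    have hδpos : 0 < δ := half_pos hε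
    have hδ : ∀ t ∈ Set.Icc r (r + δ), f r / 2 ≤ f t := by
      intro t ht
      have : dist t r < ε := by
        rw [Real.dist_eq, abs_of_nonneg (by linarith [ht.1])]
        linarith [ht.2]
      have := hδ0 this
      rw [Real.dist_eq, abs_lt] at this
      linarith [this.1]
    -- choose S
    obtain ⟨S', hS'⟩ := eventually_atTop.mp
      (hgtop.eventually_ge_atTop (2 * max r Sf))
    set S := max (max S' S2) (s0 + 1) with hSdef
    have hS0 : (0:ℝ) < S := lt_of_lt_of_le (by linarith : (0:ℝ) < S2)
      (le_trans (le_max_right S' S2) (le_max_left _ _))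
    have hSs0 : s0 + 1 ≤ S := le_max_right _ _
    have hs0S : s0 < S := by linarith
    -- decompose the domain
    have hset : Set.Ici s0 = {s0} ∪ (Set.Ioc s0 S ∪ Set.Ioi S) := by
      ext x
      simp only [Set.mem_union, Set.mem_singleton_iff, Set.mem_Ici, Set.mem_Ioc, Set.mem_Ioi]
      constructor
      · intro hx
        rcases eq_or_lt_of_le hx with h | h
        · exact Or.inl h.symm
        · rcases le_or_gt x S with h2 | h2
          · exact Or.inr (Or.inl ⟨h, h2⟩)
          · exact Or.inr (Or.inr h2)
      · rintro (h | ⟨h, _⟩ | h)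
        · exact h ▸ le_rfl
        · exact h.le
        · linarith
    rw [hset]
    have humeas' := humeas r
    refine MeasureTheory.IntegrableOn.union ?_ (MeasureTheory.IntegrableOn.union ?_ ?_)
    · -- singleton
      exact (integrableOn_singleton_iff enorm_ne_top).mpr (Or.inr (by
        rw [Real.volume_singleton]; exact ENNReal.zero_lt_top))
    · -- middle part Ioc s0 S
      -- bound a ∘ g on [s0, S]
      obtain ⟨x, hx, hmax'⟩ := isCompact_Icc.exists_isMaxOn
        (Set.nonempty_Icc.mpr (hgmono.monotone hs0S.le))
        (hacont.continuousOn (s := Set.Icc (g s0) (g S)))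
      have hmax : ∀ y ∈ Set.Icc (g s0) (g S), a y ≤ a x := fun y hy => hmax' hy
      have hApos : 0 < a x := lt_of_lt_of_le hν (hab x)
      set c := 1 / Real.sqrt (a x) with hcdef
      have hcpos : 0 < c := by positivity
      have glin : ∀ s ∈ Set.Icc s0 S, r + c * (s - s0) ≤ g s := by
        intro s hs
        have := deriv_ge_linear (convex_Icc s0 S) (fun t _ => hg t)
          (fun t ht => one_div_le_one_div_of_le
            (Real.sqrt_pos.mpr (lt_of_lt_of_le hν (hab _)))
            (Real.sqrt_le_sqrt (hmax _ ⟨hgmono.monotone ht.1, hgmono.monotone ht.2⟩)))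
          (Set.left_mem_Icc.mpr hs0S.le) hs hs.1
        rw [hgs0] at this
        linarith
      set c' := min c (δ / (S - s0)) with hc'def
      have hc'pos : 0 < c' := lt_min hcpos (div_pos hδpos (by linarith))
      set E := 1 / Real.sqrt (f r / 2 * c') with hEdef
      have hEpos : 0 < E := by positivity
      have hFlow : ∀ s ∈ Set.Ioc s0 S, f r / 2 * c' * (s - s0) ≤ ∫ τ in r..(g s), f τ := by
        intro s hs
        set w := s - s0 with hwdef
        have hwpos : 0 < w := by simp only [hwdef]; linarith [hs.1]
        have hwle : w ≤ S - s0 := by simp only [hwdef]; linarith [hs.2]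
        have hglin := glin s ⟨hs.1.le, hs.2⟩
        rw [← hwdef] at hglin
        have hmincw : c' * w ≤ min (c * w) δ := by
          rcases le_total (c * w) δ with hcase | hcase
          · rw [min_eq_left hcase]
            exact mul_le_mul_of_nonneg_right (min_le_left _ _) hwpos.le
          · rw [min_eq_right hcase]
            calc c' * w ≤ δ / (S - s0) * w :=
                  mul_le_mul_of_nonneg_right (min_le_right _ _) hwpos.le
              _ ≤ δ / (S - s0) * (S - s0) :=
                  mul_le_mul_of_nonneg_left hwle (le_of_lt (div_pos hδpos (by linarith)))
              _ = δ := div_mul_cancel₀ δ (ne_of_gt (by linarith : (0:ℝ) < S - s0))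
        -- F (g s) ≥ f r / 2 * min (c * w) δ
        have hkey : f r / 2 * min (c * w) δ ≤ ∫ τ in r..(g s), f τ := by
          set t1 := r + min (c * w) δ with ht1def
          have hmin_pos : 0 < min (c * w) δ := lt_min (mul_pos hcpos hwpos) hδpos
          have ht1r : r < t1 := by simp only [ht1def]; linarith
          have ht1δ : t1 ≤ r + δ := by
            simp only [ht1def]
            linarith [min_le_right (c * w) δ]
          have hgt1 : t1 ≤ g s := by
            have : t1 ≤ r + c * w := by
              simp only [ht1def]
              linarith [min_le_left (c * w) δ]
            linarith
          have hstep1 : f r / 2 * min (c * w) δ ≤ ∫ τ in r..t1, f τ := by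
            have hmono := intervalIntegral.integral_mono_on
              (f := fun _ => f r / 2) (g := f) (μ := MeasureTheory.volume) ht1r.le
              intervalIntegrable_const (hfcont.intervalIntegrable _ _)
              (fun u hu => hδ u ⟨hu.1, le_trans hu.2 ht1δ⟩)
            calc f r / 2 * min (c * w) δ = (t1 - r) * (f r / 2) := by
                  simp only [ht1def]; ring
              _ = ∫ _ in r..t1, (f r / 2) := by
                  rw [intervalIntegral.integral_const, smul_eq_mul]
              _ ≤ ∫ τ in r..t1, f τ := hmono
          have hstep2 : (0:ℝ) ≤ ∫ τ in t1..(g s), f τ := by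
            apply intervalIntegral.integral_nonneg hgt1
            intro u hu
            exact hfposr u (lt_of_lt_of_le ht1r hu.1)
          have hsplit : (∫ τ in r..t1, f τ) + (∫ τ in t1..(g s), f τ) =
              ∫ τ in r..(g s), f τ :=
            intervalIntegral.integral_add_adjacent_intervals
              (hfcont.intervalIntegrable _ _) (hfcont.intervalIntegrable _ _)
          linarith
        calc f r / 2 * c' * w ≤ f r / 2 * min (c * w) δ := by
              have := mul_le_mul_of_nonneg_left hmincw (by positivity : (0:ℝ) ≤ f r / 2)
              linarith
          _ ≤ ∫ τ in r..(g s), f τ := hkey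
      -- dominating function integrable
      have hbint : IntegrableOn (fun s : ℝ => E * (s - s0) ^ (-(1/2) : ℝ))
          (Set.Ioc s0 S) := by
        have h1 : IntervalIntegrable (fun x : ℝ => x ^ (-(1/2) : ℝ)) volume 0 (S - s0) :=
          intervalIntegral.intervalIntegrable_rpow' (by norm_num)
        have h2 := (h1.comp_sub_right s0)
        rw [zero_add, sub_add_cancel] at h2
        have h3 := h2.const_mul E
        exact (intervalIntegrable_iff_integrableOn_Ioc_of_le hs0S.le).mp h3
      refine MeasureTheory.Integrable.mono hbint humeas'.aestronglyMeasurable ?_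
      rw [ae_restrict_iff' measurableSet_Ioc]
      refine Filter.Eventually.of_forall (fun s hs => ?_)
      have hwpos : 0 < s - s0 := by linarith [hs.1]
      have hFl := hFlow s hs
      have hFpos : 0 < f r / 2 * c' * (s - s0) := by positivity
      have hsqF : 0 < Real.sqrt (∫ τ in r..(g s), f τ) :=
        Real.sqrt_pos.mpr (lt_of_lt_of_le hFpos hFl)
      have hsqle : Real.sqrt (f r / 2 * c' * (s - s0)) ≤
          Real.sqrt (∫ τ in r..(g s), f τ) := Real.sqrt_le_sqrt hFl
      have hsql : Real.sqrt (f r / 2 * c' * (s - s0)) =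
          Real.sqrt (f r / 2 * c') * Real.sqrt (s - s0) :=
        Real.sqrt_mul (by positivity) _
      have hsqwpos : 0 < Real.sqrt (s - s0) := Real.sqrt_pos.mpr hwpos
      have hub : 1 / Real.sqrt (∫ τ in r..(g s), f τ) ≤ E * (s - s0) ^ (-(1/2) : ℝ) := by
        have h1 := one_div_le_one_div_of_le (by rw [hsql] at *; positivity) hsqle
        calc 1 / Real.sqrt (∫ τ in r..(g s), f τ)
            ≤ 1 / Real.sqrt (f r / 2 * c' * (s - s0)) := by
              apply one_div_le_one_div_of_le _ hsqle
              rw [hsql]; positivity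
          _ = E * (s - s0) ^ (-(1/2) : ℝ) := by
              rw [hsql, hEdef, Real.rpow_neg hwpos.le, ← Real.sqrt_eq_rpow]
              field_simp
      have h2 : (0:ℝ) ≤ 1 / Real.sqrt (∫ τ in r..(g s), f τ) := by positivity
      have h3 : (0:ℝ) ≤ E * (s - s0) ^ (-(1/2) : ℝ) := by positivity
      rw [Real.norm_eq_abs, Real.norm_eq_abs, abs_of_nonneg h2, abs_of_nonneg h3]
      exact hub
    · -- tail Ioi S
      set D' := fInf / 2 * (c1 / 2) ^ (p + 1) with hD'def
      have hD'pos : 0 < D' := mul_pos (by positivity) (Real.rpow_pos_of_pos (by positivity) _)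
      have hsqD' : 0 < Real.sqrt D' := Real.sqrt_pos.mpr hD'pos
      have hφint : IntegrableOn (fun s : ℝ => (1 / Real.sqrt D') * s ^ (-m))
          (Set.Ioi S) := by
        exact ((integrableOn_Ioi_rpow_iff hS0).mpr (by linarith)).const_mul _
      refine MeasureTheory.Integrable.mono hφint humeas'.aestronglyMeasurable ?_
      rw [ae_restrict_iff' measurableSet_Ioi]
      refine Filter.Eventually.of_forall (fun s hs => ?_)
      have hsS : S < s := hs
      have hspos : (0:ℝ) < s := lt_trans hS0 hsS
      have hgs2 : 2 * max r Sf ≤ g s :=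
        hS' s (le_trans (le_trans (le_max_left _ _) (le_max_left _ _)) hsS.le)
      have hFl := F_lower hfcont hfInf hp0 hSf1 (fun t ht => (hfB t ht).1)
        hfr.le hfposr hgs2
      have hglb : c1 * s ^ q ≤ g s :=
        (hgb s (le_trans (le_trans (le_max_right _ _) (le_max_left _ _)) hsS.le)).1
      have hgsp : D' * s ^ (2 * m) ≤ fInf / 2 * (g s / 2) ^ (p + 1) := by
        have h1 : (c1 / 2) * s ^ q ≤ g s / 2 := by linarith
        have h2 : ((c1 / 2) * s ^ q) ^ (p + 1) ≤ (g s / 2) ^ (p + 1) :=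
          Real.rpow_le_rpow (by positivity) h1 (by linarith)
        have h3 : ((c1 / 2) * s ^ q) ^ (p + 1) =
            (c1 / 2) ^ (p + 1) * s ^ (2 * m) := by
          rw [Real.mul_rpow (by positivity) (Real.rpow_nonneg hspos.le _),
            ← Real.rpow_mul hspos.le, hqm]
        rw [hD'def]
        calc fInf / 2 * (c1 / 2) ^ (p + 1) * s ^ (2 * m)
            = fInf / 2 * ((c1 / 2) ^ (p + 1) * s ^ (2 * m)) := by ring
          _ = fInf / 2 * ((c1 / 2) * s ^ q) ^ (p + 1) := by rw [h3]
          _ ≤ fInf / 2 * (g s / 2) ^ (p + 1) :=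
              mul_le_mul_of_nonneg_left h2 (by positivity)
      have hFge : D' * s ^ (2 * m) ≤ ∫ τ in r..(g s), f τ := le_trans hgsp hFl
      have hFpos : 0 < ∫ τ in r..(g s), f τ :=
        lt_of_lt_of_le (by positivity) hFge
      have hsqF : 0 < Real.sqrt (∫ τ in r..(g s), f τ) := Real.sqrt_pos.mpr hFpos
      have hsqge : Real.sqrt D' * s ^ m ≤ Real.sqrt (∫ τ in r..(g s), f τ) := by
        calc Real.sqrt D' * s ^ m = Real.sqrt (D' * s ^ (2 * m)) := by
              rw [Real.sqrt_mul hD'pos.le, hsqm s hspos.le]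
          _ ≤ Real.sqrt (∫ τ in r..(g s), f τ) := Real.sqrt_le_sqrt hFge
      have hub : 1 / Real.sqrt (∫ τ in r..(g s), f τ) ≤ (1 / Real.sqrt D') * s ^ (-m) := by
        have h1 := one_div_le_one_div_of_le (by positivity) hsqge
        have heq : 1 / (Real.sqrt D' * s ^ m) = (1 / Real.sqrt D') * s ^ (-m) := by
          rw [Real.rpow_neg hspos.le]
          field_simp
        linarith [heq ▸ h1]
      have h2 : (0:ℝ) ≤ 1 / Real.sqrt (∫ τ in r..(g s), f τ) := by positivity
      have h3 : (0:ℝ) ≤ (1 / Real.sqrt D') * s ^ (-m) := by positivity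
      rw [Real.norm_eq_abs, Real.norm_eq_abs, abs_of_nonneg h2, abs_of_nonneg h3]
      exact hub
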